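/- With J as defined in the context, fix an n×k matrix V' with strictly positive entries and assume that for every index pair (i,j) the quantities (Δ₁)_{ij} = (B₁⁺ + B₂⁺ + V'(A₁⁻ + A₂⁻) + λ₂(W_P + W_Q)V')_{ij} and (Δ₂)_{ij} = (B₁⁻ + B₂⁻ + V'(A₁⁺ + A₂⁺) + λ₂(D_P + D_Q)V')_{ij} are strictly positive. Then the matrix V* with entries v*_{ij} = v'_{ij} · sqrt( (Δ₁)_{ij} / (Δ₂)_{ij} ) is the global minimizer of V ↦ J(V, V') over n×k matrices with strictly positive entries: it satisfies the first-order condition ∂J(V,V')/∂v_{ij} = 0 at V = V*, and J(V*, V') ≤ J(V, V') for every n×k matrix V with strictly positive entries. -/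

import Mathlib

open Matrix BigOperators Real

noncomputable section

/-- Positive part of a matrix: M⁺ᵢⱼ = (|Mᵢⱼ| + Mᵢⱼ)/2. -/
def mpos {α β : Type*} (M : Matrix α β ℝ) : Matrix α β ℝ :=
  Matrix.of fun i j => (|M i j| + M i j) / 2

/-- Negative part of a matrix: M⁻ᵢⱼ = (|Mᵢⱼ| − Mᵢⱼ)/2. -/
def mneg {α β : Type*} (M : Matrix α β ℝ) : Matrix α β ℝ :=
  Matrix.of fun i j => (|M i j| - M i j) / 2

/-- Degree matrix of a weight matrix: diagonal with Dᵢᵢ = Σⱼ Wᵢⱼ. -/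
def dmat {n : ℕ} (W : Matrix (Fin n) (Fin n) ℝ) : Matrix (Fin n) (Fin n) ℝ :=
  Matrix.diagonal (fun i => ∑ j, W i j)

/-- The objective F(V) of the V-subproblem (eq. (17) in the paper). -/
def Fobj {n k : ℕ} (B₁ B₂ : Matrix (Fin n) (Fin k) ℝ)
    (A₁ A₂ : Matrix (Fin k) (Fin k) ℝ)
    (WP WQ : Matrix (Fin n) (Fin n) ℝ) (lam : ℝ)
    (V : Matrix (Fin n) (Fin k) ℝ) : ℝ :=
  -2 * Matrix.trace (Vᵀ * mpos B₁) + 2 * Matrix.trace (Vᵀ * mneg B₁)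
    + Matrix.trace (V * mpos A₁ * Vᵀ) - Matrix.trace (V * mneg A₁ * Vᵀ)
    - 2 * Matrix.trace (Vᵀ * mpos B₂) + 2 * Matrix.trace (Vᵀ * mneg B₂)
    + Matrix.trace (V * mpos A₂ * Vᵀ) - Matrix.trace (V * mneg A₂ * Vᵀ)
    + lam * Matrix.trace (Vᵀ * dmat WP * V) - lam * Matrix.trace (Vᵀ * WP * V)
    + lam * Matrix.trace (Vᵀ * dmat WQ * V) - lam * Matrix.trace (Vᵀ * WQ * V)

/-- The auxiliary function J(V, V') of Lemma 3 in the paper. -/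
def Jaux {n k : ℕ} (B₁ B₂ : Matrix (Fin n) (Fin k) ℝ)
    (A₁ A₂ : Matrix (Fin k) (Fin k) ℝ)
    (WP WQ : Matrix (Fin n) (Fin n) ℝ) (lam : ℝ)
    (V V' : Matrix (Fin n) (Fin k) ℝ) : ℝ :=
  -2 * ∑ i, ∑ s, mpos B₁ i s * V' i s * (1 + Real.log (V i s / V' i s))
    + 2 * ∑ i, ∑ s, mneg B₁ i s * ((V i s) ^ 2 + (V' i s) ^ 2) / (2 * V' i s)
    + ∑ i, ∑ s, (V' * mpos A₁) i s * (V i s) ^ 2 / V' i s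
    - ∑ i, ∑ s, ∑ l, mneg A₁ s l * V' i s * V' i l *
        (1 + Real.log (V i s * V i l / (V' i s * V' i l)))
    - 2 * ∑ i, ∑ s, mpos B₂ i s * V' i s * (1 + Real.log (V i s / V' i s))
    + 2 * ∑ i, ∑ s, mneg B₂ i s * ((V i s) ^ 2 + (V' i s) ^ 2) / (2 * V' i s)
    + ∑ i, ∑ s, (V' * mpos A₂) i s * (V i s) ^ 2 / V' i s
    - ∑ i, ∑ s, ∑ l, mneg A₂ s l * V' i s * V' i l *
        (1 + Real.log (V i s * V i l / (V' i s * V' i l)))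
    + lam * ∑ i, ∑ s, (dmat WP * V') i s * (V i s) ^ 2 / V' i s
    - lam * ∑ a, ∑ c, ∑ j, WP a c * V' a j * V' c j *
        (1 + Real.log (V a j * V c j / (V' a j * V' c j)))
    + lam * ∑ i, ∑ s, (dmat WQ * V') i s * (V i s) ^ 2 / V' i s
    - lam * ∑ a, ∑ c, ∑ j, WQ a c * V' a j * V' c j *
        (1 + Real.log (V a j * V c j / (V' a j * V' c j)))

lemma mpos_isSymm {k : ℕ} (A : Matrix (Fin k) (Fin k) ℝ) (hA : A.IsSymm) :
    (mpos A).IsSymm := by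
  ext i j; simp [mpos, Matrix.transpose_apply, hA.apply]

lemma mneg_isSymm {k : ℕ} (A : Matrix (Fin k) (Fin k) ℝ) (hA : A.IsSymm) :
    (mneg A).IsSymm := by
  ext i j; simp [mneg, Matrix.transpose_apply, hA.apply]

lemma sumB {n k : ℕ} (P V V' : Matrix (Fin n) (Fin k) ℝ)
    (hV : ∀ i j, 0 < V i j) (hV' : ∀ i j, 0 < V' i j) :
    ∑ i, ∑ s, P i s * V' i s * (1 + Real.log (V i s / V' i s))
      = (∑ i, ∑ s, P i s * V' i s * Real.log (V i s))
        + ∑ i, ∑ s, P i s * V' i s * (1 - Real.log (V' i s)) := by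
  rw [← Finset.sum_add_distrib]
  refine Finset.sum_congr rfl fun i _ => ?_
  rw [← Finset.sum_add_distrib]
  refine Finset.sum_congr rfl fun s _ => ?_
  rw [Real.log_div (hV i s).ne' (hV' i s).ne']
  ring

lemma sumQ {n k : ℕ} (N V V' : Matrix (Fin n) (Fin k) ℝ) (hV' : ∀ i j, 0 < V' i j) :
    2 * ∑ i, ∑ s, N i s * ((V i s) ^ 2 + (V' i s) ^ 2) / (2 * V' i s)
      = (∑ i, ∑ s, N i s * (V i s) ^ 2 / V' i s) + ∑ i, ∑ s, N i s * V' i s := by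
  rw [Finset.mul_sum, ← Finset.sum_add_distrib]
  refine Finset.sum_congr rfl fun i _ => ?_
  rw [Finset.mul_sum, ← Finset.sum_add_distrib]
  refine Finset.sum_congr rfl fun s _ => ?_
  have := (hV' i s).ne'
  field_simp

lemma sumA {n k : ℕ} (M : Matrix (Fin k) (Fin k) ℝ) (hM : M.IsSymm)
    (V V' : Matrix (Fin n) (Fin k) ℝ)
    (hV : ∀ i j, 0 < V i j) (hV' : ∀ i j, 0 < V' i j) :
    ∑ i, ∑ s, ∑ l, M s l * V' i s * V' i l *
        (1 + Real.log (V i s * V i l / (V' i s * V' i l)))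
      = 2 * (∑ i, ∑ s, (V' * M) i s * V' i s * Real.log (V i s))
        + ∑ i, ∑ s, ∑ l, M s l * V' i s * V' i l *
            (1 - Real.log (V' i s) - Real.log (V' i l)) := by
  have hsplit : ∀ i s l, M s l * V' i s * V' i l *
        (1 + Real.log (V i s * V i l / (V' i s * V' i l)))
      = M s l * V' i s * V' i l * Real.log (V i s)
        + M s l * V' i s * V' i l * Real.log (V i l)
        + M s l * V' i s * V' i l * (1 - Real.log (V' i s) - Real.log (V' i l)) := by
    intro i s l
    rw [Real.log_div (mul_pos (hV _ _) (hV _ _)).ne' (mul_pos (hV' _ _) (hV' _ _)).ne',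
      Real.log_mul (hV i s).ne' (hV i l).ne', Real.log_mul (hV' i s).ne' (hV' i l).ne']
    ring
  simp only [hsplit, Finset.sum_add_distrib]
  have h2 : (∑ i : Fin n, ∑ s, ∑ l, M s l * V' i s * V' i l * Real.log (V i l))
      = ∑ i : Fin n, ∑ s, ∑ l, M s l * V' i s * V' i l * Real.log (V i s) := by
    refine Finset.sum_congr rfl fun i _ => ?_
    rw [Finset.sum_comm]
    refine Finset.sum_congr rfl fun s _ => Finset.sum_congr rfl fun l _ => ?_
    rw [hM.apply]
    ring
  have h3 : (∑ i : Fin n, ∑ s, ∑ l, M s l * V' i s * V' i l * Real.log (V i s))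
      = ∑ i : Fin n, ∑ s, (V' * M) i s * V' i s * Real.log (V i s) := by
    refine Finset.sum_congr rfl fun i _ => Finset.sum_congr rfl fun s _ => ?_
    rw [Matrix.mul_apply, Finset.sum_mul, Finset.sum_mul]
    refine Finset.sum_congr rfl fun l _ => ?_
    rw [hM.apply l s]
    ring
  rw [h2, h3]
  ring

lemma sumW {n k : ℕ} (W : Matrix (Fin n) (Fin n) ℝ) (hW : W.IsSymm)
    (V V' : Matrix (Fin n) (Fin k) ℝ)
    (hV : ∀ i j, 0 < V i j) (hV' : ∀ i j, 0 < V' i j) :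
    ∑ a, ∑ c, ∑ j, W a c * V' a j * V' c j *
        (1 + Real.log (V a j * V c j / (V' a j * V' c j)))
      = 2 * (∑ a, ∑ j, (W * V') a j * V' a j * Real.log (V a j))
        + ∑ a, ∑ c, ∑ j, W a c * V' a j * V' c j *
            (1 - Real.log (V' a j) - Real.log (V' c j)) := by
  have hsplit : ∀ a c j, W a c * V' a j * V' c j *
        (1 + Real.log (V a j * V c j / (V' a j * V' c j)))
      = W a c * V' a j * V' c j * Real.log (V a j)
        + W a c * V' a j * V' c j * Real.log (V c j)
        + W a c * V' a j * V' c j * (1 - Real.log (V' a j) - Real.log (V' c j)) := by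
    intro a c j
    rw [Real.log_div (mul_pos (hV _ _) (hV _ _)).ne' (mul_pos (hV' _ _) (hV' _ _)).ne',
      Real.log_mul (hV a j).ne' (hV c j).ne', Real.log_mul (hV' a j).ne' (hV' c j).ne']
    ring
  simp only [hsplit, Finset.sum_add_distrib]
  have h2 : (∑ a : Fin n, ∑ c, ∑ j, W a c * V' a j * V' c j * Real.log (V c j))
      = ∑ a : Fin n, ∑ c, ∑ j, W a c * V' a j * V' c j * Real.log (V a j) := by
    rw [Finset.sum_comm]
    refine Finset.sum_congr rfl fun a _ => Finset.sum_congr rfl fun c _ =>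
      Finset.sum_congr rfl fun j _ => ?_
    rw [hW.apply]
    ring
  have h3 : (∑ a : Fin n, ∑ c, ∑ j, W a c * V' a j * V' c j * Real.log (V a j))
      = ∑ a : Fin n, ∑ j, (W * V') a j * V' a j * Real.log (V a j) := by
    refine Finset.sum_congr rfl fun a _ => ?_
    rw [Finset.sum_comm]
    refine Finset.sum_congr rfl fun j _ => ?_
    rw [Matrix.mul_apply, Finset.sum_mul, Finset.sum_mul]
    refine Finset.sum_congr rfl fun c _ => ?_
    ring
  rw [h2, h3]
  ring

lemma Jaux_formula {n k : ℕ} (B₁ B₂ : Matrix (Fin n) (Fin k) ℝ)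
    (A₁ A₂ : Matrix (Fin k) (Fin k) ℝ) (hA₁ : A₁.IsSymm) (hA₂ : A₂.IsSymm)
    (WP WQ : Matrix (Fin n) (Fin n) ℝ) (hWP : WP.IsSymm) (hWQ : WQ.IsSymm)
    (lam : ℝ) (V' : Matrix (Fin n) (Fin k) ℝ) (hV' : ∀ i j, 0 < V' i j)
    (Δ₁ Δ₂ : Matrix (Fin n) (Fin k) ℝ)
    (hΔ₁def : Δ₁ = mpos B₁ + mpos B₂ + V' * (mneg A₁ + mneg A₂)
        + lam • ((WP + WQ) * V'))
    (hΔ₂def : Δ₂ = mneg B₁ + mneg B₂ + V' * (mpos A₁ + mpos A₂)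
        + lam • ((dmat WP + dmat WQ) * V')) :
    ∃ K : ℝ, ∀ V : Matrix (Fin n) (Fin k) ℝ, (∀ i j, 0 < V i j) →
      Jaux B₁ B₂ A₁ A₂ WP WQ lam V V'
        = (∑ i, ∑ s, (Δ₂ i s * (V i s) ^ 2 / V' i s
            - 2 * Δ₁ i s * V' i s * Real.log (V i s))) + K := by
  refine ⟨-2 * (∑ i, ∑ s, mpos B₁ i s * V' i s * (1 - Real.log (V' i s)))
      + (∑ i, ∑ s, mneg B₁ i s * V' i s)
      - (∑ i, ∑ s, ∑ l, mneg A₁ s l * V' i s * V' i l *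
          (1 - Real.log (V' i s) - Real.log (V' i l)))
      - 2 * (∑ i, ∑ s, mpos B₂ i s * V' i s * (1 - Real.log (V' i s)))
      + (∑ i, ∑ s, mneg B₂ i s * V' i s)
      - (∑ i, ∑ s, ∑ l, mneg A₂ s l * V' i s * V' i l *
          (1 - Real.log (V' i s) - Real.log (V' i l)))
      - lam * (∑ a, ∑ c, ∑ j, WP a c * V' a j * V' c j *
          (1 - Real.log (V' a j) - Real.log (V' c j)))
      - lam * (∑ a, ∑ c, ∑ j, WQ a c * V' a j * V' c j *
          (1 - Real.log (V' a j) - Real.log (V' c j))), fun V hV => ?_⟩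
  have hRHS : (∑ i, ∑ s, (Δ₂ i s * (V i s) ^ 2 / V' i s
        - 2 * Δ₁ i s * V' i s * Real.log (V i s)))
      = ((∑ i, ∑ s, mneg B₁ i s * (V i s) ^ 2 / V' i s)
        + (∑ i, ∑ s, mneg B₂ i s * (V i s) ^ 2 / V' i s)
        + (∑ i, ∑ s, (V' * mpos A₁) i s * (V i s) ^ 2 / V' i s)
        + (∑ i, ∑ s, (V' * mpos A₂) i s * (V i s) ^ 2 / V' i s)
        + lam * (∑ i, ∑ s, (dmat WP * V') i s * (V i s) ^ 2 / V' i s)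
        + lam * (∑ i, ∑ s, (dmat WQ * V') i s * (V i s) ^ 2 / V' i s))
        - (2 * (∑ i, ∑ s, mpos B₁ i s * V' i s * Real.log (V i s))
        + 2 * (∑ i, ∑ s, mpos B₂ i s * V' i s * Real.log (V i s))
        + 2 * (∑ i, ∑ s, (V' * mneg A₁) i s * V' i s * Real.log (V i s))
        + 2 * (∑ i, ∑ s, (V' * mneg A₂) i s * V' i s * Real.log (V i s))
        + lam * (2 * (∑ i, ∑ s, (WP * V') i s * V' i s * Real.log (V i s)))
        + lam * (2 * (∑ i, ∑ s, (WQ * V') i s * V' i s * Real.log (V i s)))) := by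
    simp only [Finset.mul_sum, ← Finset.sum_add_distrib, ← Finset.sum_sub_distrib]
    refine Finset.sum_congr rfl fun i _ => Finset.sum_congr rfl fun s _ => ?_
    have h1 : Δ₁ i s = mpos B₁ i s + mpos B₂ i s + ((V' * mneg A₁) i s + (V' * mneg A₂) i s)
        + lam * ((WP * V') i s + (WQ * V') i s) := by
      rw [hΔ₁def]
      simp [Matrix.add_apply, Matrix.mul_add, Matrix.add_mul, Matrix.smul_apply, smul_eq_mul, mul_add]
    have h2 : Δ₂ i s = mneg B₁ i s + mneg B₂ i s + ((V' * mpos A₁) i s + (V' * mpos A₂) i s)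
        + lam * ((dmat WP * V') i s + (dmat WQ * V') i s) := by
      rw [hΔ₂def]
      simp [Matrix.add_apply, Matrix.mul_add, Matrix.add_mul, Matrix.smul_apply, smul_eq_mul, mul_add]
    rw [h1, h2]
    have := (hV' i s).ne'
    field_simp
    ring
  rw [Jaux, sumB (mpos B₁) V V' hV hV', sumB (mpos B₂) V V' hV hV',
    sumQ (mneg B₁) V V' hV', sumQ (mneg B₂) V V' hV',
    sumA (mneg A₁) (mneg_isSymm A₁ hA₁) V V' hV hV',
    sumA (mneg A₂) (mneg_isSymm A₂ hA₂) V V' hV hV',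
    sumW WP hWP V V' hV hV', sumW WQ hWQ V V' hV hV', hRHS]
  ring


lemma scalar_min (a b v w : ℝ) (hb : 0 < b) (hv : 0 < v) (hw : 0 < w)
    (hbw : b = 2 * a * w ^ 2) :
    a * w ^ 2 - b * Real.log w ≤ a * v ^ 2 - b * Real.log v := by
  have hlog : Real.log v - Real.log w ≤ v / w - 1 := by
    rw [← Real.log_div hv.ne' hw.ne']
    exact Real.log_le_sub_one_of_pos (by positivity)
  have h1 : b * (Real.log v - Real.log w) ≤ b * (v / w - 1) :=
    mul_le_mul_of_nonneg_left hlog hb.le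
  have h2 : b * (v / w - 1) = 2 * a * w * v - 2 * a * w ^ 2 := by
    rw [hbw]; field_simp
  have ha : 0 < a := by nlinarith [sq_nonneg w]
  nlinarith [mul_nonneg ha.le (sq_nonneg (v - w))]

/-- Lemma (auxiliary function, global-minimum part): the matrix
V*ᵢⱼ = v'ᵢⱼ √((Δ₁)ᵢⱼ/(Δ₂)ᵢⱼ) satisfies the first-order condition
∂J(V,V')/∂vᵢⱼ = 0 and globally minimizes V ↦ J(V, V') over entrywise
positive matrices. -/
theorem Jaux_global_min (n k : ℕ) (B₁ B₂ : Matrix (Fin n) (Fin k) ℝ)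
    (A₁ A₂ : Matrix (Fin k) (Fin k) ℝ) (hA₁ : A₁.IsSymm) (hA₂ : A₂.IsSymm)
    (WP WQ : Matrix (Fin n) (Fin n) ℝ) (hWP : WP.IsSymm) (hWQ : WQ.IsSymm)
    (hWPnn : ∀ i j, 0 ≤ WP i j) (hWQnn : ∀ i j, 0 ≤ WQ i j)
    (lam : ℝ) (hlam : 0 ≤ lam)
    (V' : Matrix (Fin n) (Fin k) ℝ) (hV' : ∀ i j, 0 < V' i j)
    (Δ₁ Δ₂ : Matrix (Fin n) (Fin k) ℝ)
    (hΔ₁def : Δ₁ = mpos B₁ + mpos B₂ + V' * (mneg A₁ + mneg A₂)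
        + lam • ((WP + WQ) * V'))
    (hΔ₂def : Δ₂ = mneg B₁ + mneg B₂ + V' * (mpos A₁ + mpos A₂)
        + lam • ((dmat WP + dmat WQ) * V'))
    (hΔ₁ : ∀ i j, 0 < Δ₁ i j) (hΔ₂ : ∀ i j, 0 < Δ₂ i j)
    (Vstar : Matrix (Fin n) (Fin k) ℝ)
    (hVstar : ∀ i j, Vstar i j = V' i j * Real.sqrt (Δ₁ i j / Δ₂ i j)) :
    (∀ i j,
      deriv
          (fun t : ℝ => Jaux B₁ B₂ A₁ A₂ WP WQ lam
            (Matrix.of fun a b => if a = i ∧ b = j then t else Vstar a b) V')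
          (Vstar i j) = 0) ∧
    (∀ V : Matrix (Fin n) (Fin k) ℝ, (∀ i j, 0 < V i j) →
      Jaux B₁ B₂ A₁ A₂ WP WQ lam Vstar V' ≤ Jaux B₁ B₂ A₁ A₂ WP WQ lam V V') := by
  obtain ⟨K, hK⟩ := Jaux_formula B₁ B₂ A₁ A₂ hA₁ hA₂ WP WQ hWP hWQ lam V' hV'
    Δ₁ Δ₂ hΔ₁def hΔ₂def
  have hVstarpos : ∀ i j, 0 < Vstar i j := by
    intro i j
    rw [hVstar]
    have h1 := hΔ₁ i j
    have h2 := hΔ₂ i j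
    have h3 := hV' i j
    positivity
  have hVstarsq : ∀ i j, Vstar i j ^ 2 = V' i j ^ 2 * (Δ₁ i j / Δ₂ i j) := by
    intro i j
    rw [hVstar, mul_pow, Real.sq_sqrt (div_pos (hΔ₁ i j) (hΔ₂ i j)).le]
  have h0 : ∀ i j, Δ₂ i j * Vstar i j ^ 2 = Δ₁ i j * V' i j ^ 2 := by
    intro i j
    have hd2 := (hΔ₂ i j).ne'
    rw [hVstarsq i j]
    field_simp
  constructor
  · intro i j
    have hwpos : 0 < Vstar i j := hVstarpos i j
    have hEq : (fun t : ℝ => Jaux B₁ B₂ A₁ A₂ WP WQ lam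
          (Matrix.of fun a b => if a = i ∧ b = j then t else Vstar a b) V')
        =ᶠ[nhds (Vstar i j)]
        (fun t : ℝ => (Δ₂ i j * t ^ 2 / V' i j - 2 * Δ₁ i j * V' i j * Real.log t)
          + ((∑ a, ∑ b, (Δ₂ a b * (Vstar a b) ^ 2 / V' a b
              - 2 * Δ₁ a b * V' a b * Real.log (Vstar a b)))
            - (Δ₂ i j * (Vstar i j) ^ 2 / V' i j
              - 2 * Δ₁ i j * V' i j * Real.log (Vstar i j)) + K)) := by
      filter_upwards [isOpen_Ioi.mem_nhds hwpos] with t ht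
      have hpos : ∀ a b,
          0 < (Matrix.of fun a b => if a = i ∧ b = j then t else Vstar a b) a b := by
        intro a b
        simp only [Matrix.of_apply]
        split
        · exact ht
        · exact hVstarpos a b
      rw [hK _ hpos]
      have hdiff : ∑ a, ∑ b,
          ((Δ₂ a b * ((Matrix.of fun a b => if a = i ∧ b = j then t else Vstar a b) a b) ^ 2
              / V' a b
            - 2 * Δ₁ a b * V' a b *
              Real.log ((Matrix.of fun a b => if a = i ∧ b = j then t else Vstar a b) a b))
          - (Δ₂ a b * (Vstar a b) ^ 2 / V' a b
            - 2 * Δ₁ a b * V' a b * Real.log (Vstar a b)))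
          = (Δ₂ i j * t ^ 2 / V' i j - 2 * Δ₁ i j * V' i j * Real.log t)
            - (Δ₂ i j * (Vstar i j) ^ 2 / V' i j
              - 2 * Δ₁ i j * V' i j * Real.log (Vstar i j)) := by
        rw [Finset.sum_eq_single i]
        · rw [Finset.sum_eq_single j]
          · simp
          · intro b _ hb
            simp [hb]
          · simp
        · intro a _ ha
          apply Finset.sum_eq_zero
          intro b _
          simp [ha]
        · simp
      simp only [Finset.sum_sub_distrib] at hdiff ⊢
      linarith
    rw [Filter.EventuallyEq.deriv_eq hEq]
    have h1 : HasDerivAt (fun t : ℝ => Δ₂ i j * t ^ 2 / V' i j)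
        (Δ₂ i j * ((2 : ℕ) * Vstar i j ^ 1) / V' i j) (Vstar i j) :=
      ((hasDerivAt_pow 2 (Vstar i j)).const_mul (Δ₂ i j)).div_const (V' i j)
    have h2 : HasDerivAt (fun t : ℝ => 2 * Δ₁ i j * V' i j * Real.log t)
        (2 * Δ₁ i j * V' i j * (Vstar i j)⁻¹) (Vstar i j) :=
      (Real.hasDerivAt_log hwpos.ne').const_mul (2 * Δ₁ i j * V' i j)
    have hd := ((h1.sub h2).add_const
      ((∑ a, ∑ b, (Δ₂ a b * (Vstar a b) ^ 2 / V' a b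
          - 2 * Δ₁ a b * V' a b * Real.log (Vstar a b)))
        - (Δ₂ i j * (Vstar i j) ^ 2 / V' i j
          - 2 * Δ₁ i j * V' i j * Real.log (Vstar i j)) + K))
    simp only [Pi.sub_apply] at hd
    rw [hd.deriv]
    have e0 := h0 i j
    have hvp := (hV' i j).ne'
    have hw := hwpos.ne'
    have hd2 := (hΔ₂ i j).ne'
    field_simp
    ring_nf
    nlinarith [e0]
  · intro V hV
    rw [hK V hV, hK Vstar hVstarpos]
    have hsum : (∑ i, ∑ s, (Δ₂ i s * (Vstar i s) ^ 2 / V' i s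
          - 2 * Δ₁ i s * V' i s * Real.log (Vstar i s)))
        ≤ ∑ i, ∑ s, (Δ₂ i s * (V i s) ^ 2 / V' i s
          - 2 * Δ₁ i s * V' i s * Real.log (V i s)) := by
      refine Finset.sum_le_sum fun i _ => Finset.sum_le_sum fun s _ => ?_
      have hbw : 2 * Δ₁ i s * V' i s = 2 * (Δ₂ i s / V' i s) * Vstar i s ^ 2 := by
        have h1 := (hΔ₂ i s).ne'
        have h2 := (hV' i s).ne'
        rw [hVstarsq i s]
        field_simp
      have hmin := scalar_min (Δ₂ i s / V' i s) (2 * Δ₁ i s * V' i s) (V i s) (Vstar i s)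
        (by have := hΔ₁ i s; have := hV' i s; positivity) (hV i s) (hVstarpos i s) hbw
      have e1 : Δ₂ i s / V' i s * Vstar i s ^ 2 = Δ₂ i s * Vstar i s ^ 2 / V' i s := by ring
      have e2 : Δ₂ i s / V' i s * V i s ^ 2 = Δ₂ i s * V i s ^ 2 / V' i s := by ring
      linarith
    linarith

end
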